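/- arXiv:2108.06982 — 5 statements merged into one kernel-verified Lean document; each statement's English description precedes it below -/
import Mathlib

section
/- Let q > 1 and let f : ℝ → ℝ be continuous with F(t) = ∫₀ᵗ f(τ) dτ. Suppose the map t ↦ f(t)/t^{2q-1} is strictly increasing on (0, ∞). Then the map t ↦ (1/(2q)) f(t) t − F(t) is strictly increasing on [0, ∞). -/
open Set intervalIntegral

theorem stmt0 (q : ℝ) (hq : 1 < q) (f : ℝ → ℝ) (hf : Continuous f)
    (F : ℝ → ℝ) (hF : ∀ t, F t = ∫ τ in (0:ℝ)..t, f τ)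
    (hmono : ∀ s t : ℝ, 0 < s → s < t →
      f s / s ^ (2 * q - 1) < f t / t ^ (2 * q - 1)) :
    StrictMonoOn (fun t => (1 / (2 * q)) * f t * t - F t) (Set.Ici (0:ℝ)) := by
  have h2q : (0:ℝ) < 2 * q := by linarith
  set c : ℝ := 2 * q - 1 with hc_def
  have hc : (0:ℝ) < c := by simp only [hc_def]; linarith
  have hc1 : c + 1 = 2 * q := by ring
  intro a ha b hb hab
  simp only [mem_Ici] at ha hb
  have hbpos : 0 < b := lt_of_le_of_lt ha hab
  have hbc : (0:ℝ) < b ^ c := Real.rpow_pos_of_pos hbpos c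
  have hint : ∀ x y : ℝ, IntervalIntegrable f MeasureTheory.volume x y :=
    fun x y => hf.intervalIntegrable x y
  have hFdiff : F b - F a = ∫ x in a..b, f x := by
    rw [hF a, hF b]
    exact intervalIntegral.integral_interval_sub_left (hint 0 b) (hint 0 a)
  have hcont_pow : Continuous (fun x : ℝ => x ^ c) := by
    apply continuous_iff_continuousAt.mpr
    intro x
    exact Real.continuousAt_rpow_const x c (Or.inr hc.le)
  -- strict integral inequality
  have h1 : (∫ x in a..b, f x) < ∫ x in a..b, (f b / b ^ c) * x ^ c := by
    apply intervalIntegral.integral_lt_integral_of_continuousOn_of_le_of_exists_lt hab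
      hf.continuousOn (continuous_const.mul hcont_pow).continuousOn
    · intro x hx
      have hx0 : 0 < x := lt_of_le_of_lt ha hx.1
      have hxc : 0 < x ^ c := Real.rpow_pos_of_pos hx0 c
      rcases eq_or_lt_of_le hx.2 with h | h
      · subst h
        rw [Pi.mul_apply, div_mul_cancel₀ _ hxc.ne']
      · calc f x = (f x / x ^ c) * x ^ c := by rw [div_mul_cancel₀ _ hxc.ne']
          _ ≤ (f b / b ^ c) * x ^ c :=
            mul_le_mul_of_nonneg_right (hmono x b hx0 h).le hxc.le
    · refine ⟨(a + b) / 2, ⟨by linarith, by linarith⟩, ?_⟩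
      have hx0 : 0 < (a + b) / 2 := by linarith
      have hxb : (a + b) / 2 < b := by linarith
      have hxc : 0 < ((a + b) / 2) ^ c := Real.rpow_pos_of_pos hx0 c
      calc f ((a + b) / 2) = (f ((a + b) / 2) / ((a + b) / 2) ^ c) * ((a + b) / 2) ^ c := by
            rw [div_mul_cancel₀ _ hxc.ne']
        _ < (f b / b ^ c) * ((a + b) / 2) ^ c :=
            mul_lt_mul_of_pos_right (hmono _ b hx0 hxb) hxc
  have h2 : (∫ x in a..b, (f b / b ^ c) * x ^ c)
      = (f b / b ^ c) * ((b ^ (c + 1) - a ^ (c + 1)) / (c + 1)) := by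
    rw [intervalIntegral.integral_const_mul, integral_rpow (Or.inl (by linarith))]
  -- algebraic facts
  have hb_eq : f b / b ^ c * b ^ (c + 1) = f b * b := by
    rw [Real.rpow_add_one hbpos.ne']
    field_simp
  have ha_le : f a * a ≤ f b / b ^ c * a ^ (c + 1) := by
    rcases eq_or_lt_of_le ha with h | h
    · subst h
      rw [Real.zero_rpow (by linarith : c + 1 ≠ 0)]
      simp
    · have hac : 0 < a ^ c := Real.rpow_pos_of_pos h c
      have haeq : f a * a = (f a / a ^ c) * a ^ (c + 1) := by
        rw [Real.rpow_add_one h.ne']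
        field_simp
      rw [haeq]
      have hac1 : 0 < a ^ (c + 1) := Real.rpow_pos_of_pos h (c + 1)
      exact mul_le_mul_of_nonneg_right (hmono a b h hab).le hac1.le
  have key : (∫ x in a..b, f x) < (f b * b - f a * a) / (2 * q) := by
    have hnum : f b / b ^ c * b ^ (c + 1) - f b / b ^ c * a ^ (c + 1)
        ≤ f b * b - f a * a := by linarith
    have : (f b / b ^ c) * ((b ^ (c + 1) - a ^ (c + 1)) / (c + 1))
        ≤ (f b * b - f a * a) / (2 * q) := by
      rw [hc1] at *
      calc (f b / b ^ c) * ((b ^ (2*q) - a ^ (2*q)) / (2 * q))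
          = (f b / b ^ c * b ^ (2*q) - f b / b ^ c * a ^ (2*q)) / (2 * q) := by ring
        _ ≤ (f b * b - f a * a) / (2 * q) := (div_le_div_iff_of_pos_right h2q).mpr hnum
    calc (∫ x in a..b, f x) < _ := h1
      _ = _ := h2
      _ ≤ _ := this
  have hfin : (f b * b - f a * a) / (2 * q)
      = 1 / (2 * q) * f b * b - 1 / (2 * q) * f a * a := by ring
  simp only
  linarith [key, hFdiff]
end

section
/- Let q > 1 and let f : ℝ → ℝ be continuous with F(t) = ∫₀ᵗ f(τ) dτ. Suppose the map t ↦ f(t)/|t|^{2q-1} is strictly increasing on (−∞, 0) (equivalently f(t)/(t|t|^{2q-2}) is strictly increasing for t < 0). Then the map t ↦ (1/(2q)) f(t) t − F(t) is strictly decreasing on (−∞, 0]. -/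
open Set intervalIntegral

lemma abs_rpow_cont (p : ℝ) (hp : 0 ≤ p) : Continuous (fun τ : ℝ => |τ| ^ p) :=
  continuous_abs.rpow_const (fun _ => Or.inr hp)

lemma rpow_split (x : ℝ) (hx : 0 < x) (q : ℝ) :
    x ^ (2 * q) = x ^ (2 * q - 1) * x := by
  rw [show 2 * q = (2 * q - 1) + 1 by ring, Real.rpow_add hx, Real.rpow_one]; norm_num

lemma key_integral (q : ℝ) (hq : 1 < q) (s t : ℝ) (hst : s ≤ t) (ht : t ≤ 0) :
    ∫ τ in s..t, |τ| ^ (2 * q - 1) = (|s| ^ (2 * q) - |t| ^ (2 * q)) / (2 * q) := by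
  have hq0 : (0:ℝ) < 2 * q := by linarith
  have h : ∀ x ∈ uIcc s t, HasDerivAt (fun τ : ℝ => -((-τ) ^ (2 * q)) / (2 * q))
      (|x| ^ (2 * q - 1)) x := by
    intro x hx
    rw [uIcc_of_le hst] at hx
    have hx0 : x ≤ 0 := le_trans hx.2 ht
    have h1 : HasDerivAt (fun τ : ℝ => (-τ) ^ (2 * q)) (2 * q * (-x) ^ (2 * q - 1) * (-1)) x := by
      have := (Real.hasDerivAt_rpow_const (x := -x) (p := 2 * q) (Or.inr (by linarith))).comp
        x (hasDerivAt_neg x)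
      exact this.congr_deriv (by ring)
    have h2 := h1.neg.div_const (2 * q)
    have habs : |x| = -x := abs_of_nonpos hx0
    refine h2.congr_deriv ?_
    rw [habs]
    field_simp
  have hint : IntervalIntegrable (fun τ : ℝ => |τ| ^ (2 * q - 1)) MeasureTheory.volume s t :=
    (abs_rpow_cont _ (by linarith)).intervalIntegrable s t
  rw [integral_eq_sub_of_hasDerivAt h hint]
  rw [abs_of_nonpos ht, abs_of_nonpos (le_trans hst ht)]
  ring

theorem stmt1 (q : ℝ) (hq : 1 < q) (f : ℝ → ℝ) (hf : Continuous f)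
    (F : ℝ → ℝ) (hF : ∀ t, F t = ∫ τ in (0:ℝ)..t, f τ)
    (hmono : ∀ s t : ℝ, s < t → t < 0 →
      f s / |s| ^ (2 * q - 1) < f t / |t| ^ (2 * q - 1)) :
    StrictAntiOn (fun t => (1 / (2 * q)) * f t * t - F t) (Set.Iic (0:ℝ)) := by
  intro s hs t ht hst
  simp only [mem_Iic] at hs ht
  have hs0 : s < 0 := lt_of_lt_of_le hst ht
  have hq0 : (0:ℝ) < 2 * q := by linarith
  set c : ℝ := f s / |s| ^ (2 * q - 1) with hc
  have hsabs : (0:ℝ) < |s| := abs_pos.mpr (ne_of_lt hs0)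
  have hsp : (0:ℝ) < |s| ^ (2 * q - 1) := Real.rpow_pos_of_pos hsabs _
  have hfs : f s = c * |s| ^ (2 * q - 1) := by rw [hc, div_mul_cancel₀ _ hsp.ne']
  have hcont : Continuous (fun τ : ℝ => c * |τ| ^ (2 * q - 1)) :=
    continuous_const.mul (abs_rpow_cont _ (by linarith))
  have hFt : F t = F s + ∫ τ in s..t, f τ := by
    rw [hF, hF]
    rw [← integral_add_adjacent_intervals (hf.intervalIntegrable 0 s) (hf.intervalIntegrable s t)]
  -- strict integral inequality
  have hkey : (∫ τ in s..t, f τ) > c * ((|s| ^ (2 * q) - |t| ^ (2 * q)) / (2 * q)) := by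
    have hpos : 0 < ∫ τ in s..t, (f τ - c * |τ| ^ (2 * q - 1)) := by
      apply intervalIntegral_pos_of_pos_on
      · exact (hf.sub hcont).intervalIntegrable s t
      · intro x hx
        have hx0 : x < 0 := lt_of_lt_of_le hx.2 ht
        have hxp : (0:ℝ) < |x| ^ (2 * q - 1) := Real.rpow_pos_of_pos (abs_pos.mpr hx0.ne) _
        have hm := hmono s x hx.1 hx0
        rw [← hc] at hm
        rw [div_lt_div_iff₀ hsp hxp] at hm
        have : c * |x| ^ (2 * q - 1) < f x := by
          rw [hc, div_mul_eq_mul_div, div_lt_iff₀ hsp]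
          linarith
        linarith
      · exact hst
    have heq : (∫ τ in s..t, (f τ - c * |τ| ^ (2 * q - 1)))
        = (∫ τ in s..t, f τ) - c * ((|s| ^ (2 * q) - |t| ^ (2 * q)) / (2 * q)) := by
      rw [intervalIntegral.integral_sub (hf.intervalIntegrable s t)
        (hcont.intervalIntegrable s t),
        intervalIntegral.integral_const_mul, key_integral q hq s t hst.le ht]
    linarith [heq ▸ hpos]
  have hfss : f s * s = -(c * |s| ^ (2 * q)) := by
    rw [hfs, rpow_split _ hsabs, abs_of_nonpos hs0.le]; ring
  -- key sign fact at t
  have hlast : f t * t + c * |t| ^ (2 * q) ≤ 0 := by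
    rcases eq_or_lt_of_le ht with h0 | h0
    · rw [h0]
      simp [Real.zero_rpow (ne_of_gt hq0)]
    · have htabs : (0:ℝ) < |t| := abs_pos.mpr h0.ne
      have htp : (0:ℝ) < |t| ^ (2 * q - 1) := Real.rpow_pos_of_pos htabs _
      have hmct := hmono s t hst h0
      rw [← hc] at hmct
      set d : ℝ := f t / |t| ^ (2 * q - 1) with hd
      have hft : f t = d * |t| ^ (2 * q - 1) := by rw [hd, div_mul_cancel₀ _ htp.ne']
      have hftt : f t * t = -(d * |t| ^ (2 * q)) := by
        rw [hft, rpow_split _ htabs, abs_of_nonpos h0.le]; ring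
      rw [hftt]
      have h2q : (0:ℝ) ≤ |t| ^ (2 * q) := (Real.rpow_pos_of_pos htabs _).le
      nlinarith
  -- conclude
  simp only
  rw [hFt]
  have h1 : (0:ℝ) < 1 / (2 * q) := by positivity
  have key2 : 1 / (2 * q) * (c * |s| ^ (2 * q) - c * |t| ^ (2 * q)) < ∫ τ in s..t, f τ := by
    have he : c * ((|s| ^ (2 * q) - |t| ^ (2 * q)) / (2 * q))
        = 1 / (2 * q) * (c * |s| ^ (2 * q) - c * |t| ^ (2 * q)) := by
      field_simp
    linarith [hkey, he ▸ hkey]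
  have step : 1 / (2 * q) * f t * t - 1 / (2 * q) * f s * s
      ≤ 1 / (2 * q) * (c * |s| ^ (2 * q) - c * |t| ^ (2 * q)) := by
    have e1 : 1 / (2 * q) * f t * t - 1 / (2 * q) * f s * s
        = 1 / (2 * q) * ((f t * t) - (f s * s)) := by ring
    rw [e1, hfss]
    have hh : (f t * t) - -(c * |s| ^ (2 * q)) ≤ c * |s| ^ (2 * q) - c * |t| ^ (2 * q) := by
      linarith
    exact mul_le_mul_of_nonneg_left hh h1.le
  linarith [key2, step]
end

section
/- Let q > 1 and let f : ℝ → ℝ be continuous with f(t) > 0 for t > 0 and t ↦ f(t)/t^{2q-1} strictly increasing on (0, ∞). Then for 0 < t₂ < t₁: (1/(2q)) f(t₁) t₁ − F(t₁) > (1/(2q)) (f(t₁)/t₁^{2q-1}) t₂^{2q} − F(t₂), where F(t) = ∫₀ᵗ f(τ) dτ. -/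
open Set intervalIntegral

theorem stmt3 (q : ℝ) (hq : 1 < q) (f : ℝ → ℝ) (hf : Continuous f)
    (hpos : ∀ t : ℝ, 0 < t → 0 < f t)
    (hmono : ∀ s t : ℝ, 0 < s → s < t →
      f s / s ^ (2 * q - 1) < f t / t ^ (2 * q - 1))
    (F : ℝ → ℝ) (hF : ∀ t, F t = ∫ τ in (0:ℝ)..t, f τ)
    (t₁ t₂ : ℝ) (ht₂ : 0 < t₂) (ht : t₂ < t₁) :
    (1 / (2 * q)) * f t₁ * t₁ - F t₁ >
      (1 / (2 * q)) * (f t₁ / t₁ ^ (2 * q - 1)) * t₂ ^ (2 * q) - F t₂ := by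
  have ht₁ : 0 < t₁ := ht₂.trans ht
  have hq2 : (0:ℝ) < 2 * q := by linarith
  set c : ℝ := f t₁ / t₁ ^ (2 * q - 1) with hc
  have hr : (-1:ℝ) < 2 * q - 1 := by linarith
  -- integral of the power function
  have hint : ∫ τ in t₂..t₁, c * τ ^ (2 * q - 1)
      = c * ((t₁ ^ (2 * q) - t₂ ^ (2 * q)) / (2 * q)) := by
    rw [intervalIntegral.integral_const_mul, integral_rpow (Or.inl hr)]
    have h1 : 2 * q - 1 + 1 = 2 * q := by ring
    rw [h1]
  -- pointwise bound
  have hle : ∀ x ∈ Ioc t₂ t₁, f x ≤ c * x ^ (2 * q - 1) := by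
    intro x hx
    have hx0 : 0 < x := ht₂.trans hx.1
    have hxp : (0:ℝ) < x ^ (2 * q - 1) := Real.rpow_pos_of_pos hx0 _
    rcases lt_or_eq_of_le hx.2 with h | h
    · have := hmono x t₁ hx0 h
      rw [div_lt_div_iff₀ hxp (Real.rpow_pos_of_pos ht₁ _)] at this
      have := (div_le_div_iff₀ hxp (Real.rpow_pos_of_pos ht₁ _)).mpr this.le
      calc f x = f x / x ^ (2 * q - 1) * x ^ (2 * q - 1) := by
            field_simp
        _ ≤ c * x ^ (2 * q - 1) := by
            have h' := hmono x t₁ hx0 h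
            exact mul_le_mul_of_nonneg_right h'.le hxp.le
    · subst h
      rw [hc, div_mul_cancel₀]
      exact (Real.rpow_pos_of_pos hx0 _).ne'
  have hlt : ∃ x ∈ Icc t₂ t₁, f x < c * x ^ (2 * q - 1) := by
    refine ⟨t₂, ⟨le_refl _, ht.le⟩, ?_⟩
    have hxp : (0:ℝ) < t₂ ^ (2 * q - 1) := Real.rpow_pos_of_pos ht₂ _
    have h' := hmono t₂ t₁ ht₂ ht
    calc f t₂ = f t₂ / t₂ ^ (2 * q - 1) * t₂ ^ (2 * q - 1) := by field_simp
      _ < c * t₂ ^ (2 * q - 1) := by exact mul_lt_mul_of_pos_right h' hxp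
  have hgc : ContinuousOn (fun x : ℝ => c * x ^ (2 * q - 1)) (Icc t₂ t₁) := by
    apply ContinuousOn.mul continuousOn_const
    exact fun x hx => (Real.continuousAt_rpow_const x _
      (Or.inl (ht₂.trans_le hx.1).ne')).continuousWithinAt
  have key : (∫ x in t₂..t₁, f x) < c * ((t₁ ^ (2 * q) - t₂ ^ (2 * q)) / (2 * q)) := by
    rw [← hint]
    exact integral_lt_integral_of_continuousOn_of_le_of_exists_lt ht
      hf.continuousOn hgc hle hlt
  have hsplit : F t₁ - F t₂ = ∫ x in t₂..t₁, f x := by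
    rw [hF, hF, ← intervalIntegral.integral_add_adjacent_intervals
      (hf.intervalIntegrable 0 t₂) (hf.intervalIntegrable t₂ t₁)]
    ring
  have hid : c * t₁ ^ (2 * q) = f t₁ * t₁ := by
    have h1 : t₁ ^ (2 * q) = t₁ ^ (2 * q - 1) * t₁ := by
      rw [show (2 * q) = (2 * q - 1) + 1 by ring, Real.rpow_add ht₁, Real.rpow_one]
      norm_num
    have hne := (Real.rpow_pos_of_pos ht₁ (2 * q - 1)).ne'
    rw [hc, h1]
    field_simp
  rw [← hsplit] at key
  have h2q : (1 / (2 * q)) * f t₁ * t₁ = c * t₁ ^ (2 * q) / (2 * q) := by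
    rw [hid]; ring
  rw [gt_iff_lt, h2q]
  have : (1 / (2 * q)) * c * t₂ ^ (2 * q) = c * t₂ ^ (2 * q) / (2 * q) := by ring
  rw [this]
  have : c * ((t₁ ^ (2 * q) - t₂ ^ (2 * q)) / (2 * q))
      = c * t₁ ^ (2 * q) / (2 * q) - c * t₂ ^ (2 * q) / (2 * q) := by ring
  linarith [key, this ▸ key]
end

section
/- Let q > 1 and f : ℝ → ℝ be continuous, odd on ℝ, with t ↦ f(t)/t^{2q-1} strictly increasing on (0, ∞). Then for every t ≠ 0, (1/(2q)) f(t) t − F(t) > 0, where F(t) = ∫₀ᵗ f(τ) dτ. -/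
theorem stmt8 (q : ℝ) (hq : 1 < q) (f : ℝ → ℝ) (hf : Continuous f)
    (hodd : ∀ t : ℝ, f (-t) = -f t)
    (hmono : ∀ s t : ℝ, 0 < s → s < t →
      f s / s ^ (2 * q - 1) < f t / t ^ (2 * q - 1))
    (F : ℝ → ℝ) (hF : ∀ t, F t = ∫ τ in (0:ℝ)..t, f τ) :
    ∀ t : ℝ, t ≠ 0 → 0 < (1 / (2 * q)) * f t * t - F t := by
  have hp : (0:ℝ) < 2 * q - 1 := by linarith
  have h2q : (0:ℝ) < 2 * q := by linarith
  -- main inequality for positive t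
  have key : ∀ t : ℝ, 0 < t → 0 < (1 / (2 * q)) * f t * t - F t := by
    intro t ht
    have htp : (0:ℝ) < t ^ (2 * q - 1) := Real.rpow_pos_of_pos ht _
    set c : ℝ := f t / t ^ (2 * q - 1) with hc
    have hgc : Continuous (fun τ : ℝ => c * τ ^ (2 * q - 1)) :=
      continuous_const.mul (Real.continuous_rpow_const hp.le)
    have hlt : (∫ τ in (0:ℝ)..t, f τ) < ∫ τ in (0:ℝ)..t, c * τ ^ (2 * q - 1) := by
      apply intervalIntegral.integral_lt_integral_of_continuousOn_of_le_of_exists_lt ht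
        hf.continuousOn hgc.continuousOn
      · intro x hx
        rcases eq_or_lt_of_le hx.2 with rfl | hxt
        · rw [hc, div_mul_cancel₀ _ htp.ne']
        · have hxp : (0:ℝ) < x ^ (2 * q - 1) := Real.rpow_pos_of_pos hx.1 _
          have := hmono x t hx.1 hxt
          calc f x = f x / x ^ (2 * q - 1) * x ^ (2 * q - 1) := by
                rw [div_mul_cancel₀ _ hxp.ne']
            _ ≤ c * x ^ (2 * q - 1) := by
                apply mul_le_mul_of_nonneg_right this.le hxp.le
      · refine ⟨t/2, ⟨by linarith, by linarith⟩, ?_⟩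
        have h2 : (0:ℝ) < t/2 := by linarith
        have hxp : (0:ℝ) < (t/2) ^ (2 * q - 1) := Real.rpow_pos_of_pos h2 _
        have := hmono (t/2) t h2 (by linarith)
        calc f (t/2) = f (t/2) / (t/2) ^ (2 * q - 1) * (t/2) ^ (2 * q - 1) := by
              rw [div_mul_cancel₀ _ hxp.ne']
          _ < c * (t/2) ^ (2 * q - 1) := by
              apply mul_lt_mul_of_pos_right this hxp
    have hval : (∫ τ in (0:ℝ)..t, c * τ ^ (2 * q - 1)) = 1 / (2 * q) * f t * t := by
      rw [intervalIntegral.integral_const_mul, integral_rpow (Or.inl (by linarith))]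
      have h1 : 2 * q - 1 + 1 = 2 * q := by ring
      rw [h1, Real.zero_rpow h2q.ne']
      have ht2q : t ^ (2 * q) = t ^ (2 * q - 1) * t := by
        rw [← Real.rpow_add_one ht.ne' (2 * q - 1), h1]
      rw [ht2q, hc]
      field_simp
      ring
    rw [hF t]
    linarith [hval ▸ hlt]
  intro t ht
  rcases lt_or_gt_of_ne ht with htneg | htpos
  · have hFe : F (-t) = F t := by
      have h1 : (∫ x in (0:ℝ)..t, f (-x)) = ∫ x in (-t)..(-(0:ℝ)), f x :=
        intervalIntegral.integral_comp_neg f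
      have h2 : (∫ x in (0:ℝ)..t, f (-x)) = -∫ x in (0:ℝ)..t, f x := by
        simp only [hodd]; exact intervalIntegral.integral_neg
      have h3 : (∫ x in (-t)..(-(0:ℝ)), f x) = -∫ x in (0:ℝ)..(-t), f x := by
        rw [neg_zero, intervalIntegral.integral_symm]
      rw [hF t, hF (-t)]
      linarith
    have := key (-t) (by linarith)
    rw [hodd t] at this
    rw [hFe] at this
    nlinarith [this]
  · exact key t htpos
end

section
/- Let q ∈ (1, 3) and q* = 3q/(3−q), K ∈ L^∞(ℝ³) ∩ L^{q*/(q*−m)}(ℝ³-balls) with K > 0, V : ℝ³ → (0,∞) continuous, and m ∈ (q, q*). Assume K(x)/V(x)^{(q*−m)/(q*−p)} → 0 as |x| → ∞ for some p < q. Then for every ε > 0 there exists R > 0 such that for all u: ∫_{|x|>R} K(x)|u(x)|^m dx ≤ ε ∫_{|x|>R} (V(x)|u(x)|^p + |u(x)|^{q*}) dx. -/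
open MeasureTheory Filter Topology Set

lemma aux19 (ε α Kx Vx t p m qs : ℝ) (hε : 0 < ε) (hα0 : 0 ≤ α) (hα1 : α ≤ 1)
    (hK : Kx ≤ ε * Vx ^ α) (hV : 0 < Vx) (ht : 0 ≤ t)
    (hm0 : m ≠ 0) (hmsum : m = p * α + qs * (1 - α)) :
    Kx * t ^ m ≤ ε * (Vx * t ^ p + t ^ qs) := by
  rcases ht.eq_or_lt with rfl | ht'
  · rw [Real.zero_rpow hm0, mul_zero]
    have h1 : (0:ℝ) ≤ (0:ℝ) ^ p := Real.rpow_nonneg le_rfl p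
    have h2 : (0:ℝ) ≤ (0:ℝ) ^ qs := Real.rpow_nonneg le_rfl qs
    positivity
  · have htp : (0:ℝ) ≤ t ^ p := Real.rpow_nonneg ht'.le p
    have htq : (0:ℝ) ≤ t ^ qs := Real.rpow_nonneg ht'.le qs
    have h1 : t ^ m = (t ^ p) ^ α * (t ^ qs) ^ (1 - α) := by
      rw [hmsum, Real.rpow_add ht', Real.rpow_mul ht'.le, Real.rpow_mul ht'.le]
    have h2 : (Vx * t ^ p) ^ α = Vx ^ α * (t ^ p) ^ α := Real.mul_rpow hV.le htp
    have young : (Vx * t ^ p) ^ α * (t ^ qs) ^ (1 - α) ≤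
        α * (Vx * t ^ p) + (1 - α) * t ^ qs :=
      Real.geom_mean_le_arith_mean2_weighted hα0 (by linarith)
        (mul_nonneg hV.le htp) htq (by ring)
    have hKnn : (0:ℝ) ≤ Kx ∨ True := Or.inr trivial
    calc Kx * t ^ m ≤ (ε * Vx ^ α) * ((t ^ p) ^ α * (t ^ qs) ^ (1 - α)) := by
          rw [h1]
          exact mul_le_mul_of_nonneg_right hK (by positivity)
      _ = ε * ((Vx * t ^ p) ^ α * (t ^ qs) ^ (1 - α)) := by rw [h2]; ring
      _ ≤ ε * (α * (Vx * t ^ p) + (1 - α) * t ^ qs) :=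
          mul_le_mul_of_nonneg_left young hε.le
      _ ≤ ε * (Vx * t ^ p + t ^ qs) := by
          apply mul_le_mul_of_nonneg_left _ hε.le
          nlinarith [mul_nonneg hV.le htp]

theorem stmt19 (p q qs m : ℝ) (hq : q ∈ Ioo (1:ℝ) 3) (hqs : qs = 3 * q / (3 - q))
    (hpq : p < q) (hm : m ∈ Ioo q qs)
    (K V : EuclideanSpace ℝ (Fin 3) → ℝ)
    (hKpos : ∀ x, 0 < K x) (hKmeas : Measurable K)
    (hKbdd : ∃ M : ℝ, ∀ x, K x ≤ M)
    (hKloc : ∀ r : ℝ, 0 < r →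
      IntegrableOn (fun x => K x ^ (qs / (qs - m))) (Metric.ball (0 : EuclideanSpace ℝ (Fin 3)) r))
    (hVpos : ∀ x, 0 < V x) (hVcont : Continuous V)
    (hdecay : Tendsto (fun x => K x / V x ^ ((qs - m) / (qs - p)))
      (cocompact (EuclideanSpace ℝ (Fin 3))) (𝓝 0)) :
    ∀ ε > (0:ℝ), ∃ R > (0:ℝ), ∀ u : EuclideanSpace ℝ (Fin 3) → ℝ,
      ∫⁻ x in {x | R < ‖x‖}, ENNReal.ofReal (K x * |u x| ^ m)
        ≤ ENNReal.ofReal ε *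
          ∫⁻ x in {x | R < ‖x‖}, ENNReal.ofReal (V x * |u x| ^ p + |u x| ^ qs) := by
  intro ε hε
  set α : ℝ := (qs - m) / (qs - p) with hα
  have hqm : m < qs := hm.2
  have hpm : p < m := hpq.trans hm.1
  have hqp0 : (0:ℝ) < qs - p := by linarith
  have hα0 : 0 ≤ α := by
    apply div_nonneg <;> linarith
  have hα1 : α ≤ 1 := by
    rw [div_le_one hqp0]; linarith
  have hm0 : m ≠ 0 := by
    have : (1:ℝ) < q := hq.1
    have := hm.1; intro h; linarith
  have hmsum : m = p * α + qs * (1 - α) := by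
    rw [hα]
    field_simp
    ring
  -- extract R from cocompact convergence
  have h1 : ∀ᶠ x in cocompact (EuclideanSpace ℝ (Fin 3)),
      K x / V x ^ α < ε := hdecay.eventually_lt_const hε
  rw [Filter.eventually_iff, mem_cocompact] at h1
  obtain ⟨s, hs, hsub⟩ := h1
  obtain ⟨r, hr⟩ := hs.isBounded.subset_closedBall 0
  refine ⟨max r 1, lt_max_of_lt_right one_pos, fun u => ?_⟩
  have hset : MeasurableSet {x : EuclideanSpace ℝ (Fin 3) | max r 1 < ‖x‖} :=
    measurableSet_lt measurable_const measurable_norm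
  have key : ∀ x : EuclideanSpace ℝ (Fin 3), max r 1 < ‖x‖ →
      K x * |u x| ^ m ≤ ε * (V x * |u x| ^ p + |u x| ^ qs) := by
    intro x hx
    have hxs : x ∉ s := by
      intro hxs
      have h := hr hxs
      rw [Metric.mem_closedBall, dist_zero_right] at h
      have : r < ‖x‖ := lt_of_le_of_lt (le_max_left r 1) hx
      linarith
    have hxd : K x / V x ^ α < ε := hsub hxs
    have hVα : (0:ℝ) < V x ^ α := Real.rpow_pos_of_pos (hVpos x) α
    have hKx : K x ≤ ε * V x ^ α := by
      rw [div_lt_iff₀ hVα] at hxd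
      linarith
    exact aux19 ε α (K x) (V x) (|u x|) p m qs hε hα0 hα1 hKx (hVpos x)
      (abs_nonneg _) hm0 hmsum
  calc ∫⁻ x in {x | max r 1 < ‖x‖}, ENNReal.ofReal (K x * |u x| ^ m)
      ≤ ∫⁻ x in {x | max r 1 < ‖x‖},
          ENNReal.ofReal (ε * (V x * |u x| ^ p + |u x| ^ qs)) := by
        apply lintegral_mono_ae
        filter_upwards [ae_restrict_mem hset] with x hx
        exact ENNReal.ofReal_le_ofReal (key x hx)
    _ = ENNReal.ofReal ε *
          ∫⁻ x in {x | max r 1 < ‖x‖},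
            ENNReal.ofReal (V x * |u x| ^ p + |u x| ^ qs) := by
        simp_rw [ENNReal.ofReal_mul hε.le]
        rw [lintegral_const_mul' _ _ ENNReal.ofReal_ne_top]
end
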